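/- Let τ = i, ε₂, ε₃ ∈ {0, 1/2}, and let ∂ be the derivation on ℂ[ℤ²] with ∂(V^a W^b) = (a + i b)·V^a W^b. The equation ∂σ₊ = −(ε₂ + ε₃ + iε₂ − iε₃)·σ₊ has a nonzero solution σ₊ ∈ ℂ[ℤ²] if and only if ε₂ = ε₃ (i.e. ε₂ = ε₃ = 0 or ε₂ = ε₃ = 1/2). -/

import Mathlib

open Complex

/-- Eigenvalue equation `∂σ = λ·σ` for the diagonal derivation
`∂(V^a W^b) = (a + i b)·V^a W^b` on the group algebra ℂ[ℤ²],
written coefficientwise. -/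
def eigenEqI (lam : ℂ) (σ : AddMonoidAlgebra ℂ (ℤ × ℤ)) : Prop :=
  ∀ p : ℤ × ℤ, ((p.1 : ℂ) + Complex.I * (p.2 : ℂ)) * σ.coeff p = lam * σ.coeff p

lemma eigen_single (lam : ℂ) (p : ℤ × ℤ) (h : ((p.1 : ℂ) + Complex.I * (p.2 : ℂ)) = lam) :
    eigenEqI lam (AddMonoidAlgebra.single p 1) := by
  intro q
  by_cases hq : q = p
  · subst hq; rw [h]
  · have : (AddMonoidAlgebra.single p (1:ℂ)).coeff q = 0 := by
      rw [AddMonoidAlgebra.coeff_single]; exact Finsupp.single_eq_of_ne (by simpa [eq_comm] using hq)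
    show ((q.1 : ℂ) + Complex.I * (q.2 : ℂ)) * (AddMonoidAlgebra.single p 1 : AddMonoidAlgebra ℂ (ℤ × ℤ)).coeff q = _
    rw [this, mul_zero, mul_zero]

theorem z4_spin_structure_restriction (ε₂ ε₃ : ℝ)
    (hε₂ : ε₂ = 0 ∨ ε₂ = 1/2) (hε₃ : ε₃ = 0 ∨ ε₃ = 1/2) :
    (∃ σp : AddMonoidAlgebra ℂ (ℤ × ℤ), σp ≠ 0 ∧
      eigenEqI (-((ε₂ : ℂ) + (ε₃ : ℂ) + Complex.I * ε₂ - Complex.I * ε₃)) σp) ↔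
    ε₂ = ε₃ := by
  constructor
  · rintro ⟨σ, hσ, heq⟩
    by_contra hne
    obtain ⟨p, hp⟩ : ∃ p, σ.coeff p ≠ 0 := by
      by_contra h
      push_neg at h
      exact hσ (AddMonoidAlgebra.coeff_injective (by ext q; simpa using h q))
    have h := heq p
    have hlam : ((p.1 : ℂ) + Complex.I * (p.2 : ℂ)) =
        -((ε₂ : ℂ) + (ε₃ : ℂ) + Complex.I * ε₂ - Complex.I * ε₃) :=
      mul_right_cancel₀ hp h
    have hre := congrArg Complex.re hlam
    simp [Complex.add_re, Complex.mul_re] at hre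
    rcases hε₂ with h2 | h2 <;> rcases hε₃ with h3 | h3 <;>
      subst h2 <;> subst h3 <;> simp_all <;>
      [skip; skip] <;>
      · have h1 : ((2 * p.1 : ℤ) : ℝ) = -1 := by push_cast; linarith
        have h2 : (2 * p.1 : ℤ) = -1 := by exact_mod_cast h1
        omega
  · intro h
    subst h
    rcases hε₂ with h2 | h2 <;> subst h2
    · exact ⟨AddMonoidAlgebra.single ((0, 0) : ℤ × ℤ) (1 : ℂ), by simp [AddMonoidAlgebra.single_eq_zero],
        eigen_single _ _ (by push_cast; simp)⟩
    · exact ⟨AddMonoidAlgebra.single ((-1, 0) : ℤ × ℤ) (1 : ℂ), by simp [AddMonoidAlgebra.single_eq_zero],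
        eigen_single _ _ (by push_cast; ring)⟩
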